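/- arXiv:2512.17373 — 2 statements merged into one kernel-verified Lean document; each statement's English description precedes it below -/
import Mathlib

section
/- Let p be a prime. For all finite sets U ⊆ F_p^× × F_p (of left vertices) and V ⊆ F_p^× × F_p (of right vertices) of the bipartite graph G_p, the number e(U,V) of adjacent pairs satisfies | e(U,V) − |U|·|V|/p | ≤ √p · √(|U|·|V|). -/
/-- Adjacency in the bipartite graph `G_p`: a left vertex `(a,c)` is adjacent to a
right vertex `(b,d)` iff there is `z ∈ F_p^×` with `b = z·a` and `d = z + c`. -/
def GpAdj (p : ℕ) (u v : (ZMod p)ˣ × ZMod p) : Prop :=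
  ∃ z : (ZMod p)ˣ, v.1 = z * u.1 ∧ v.2 = (z : ZMod p) + u.2

open Finset

section Aux
variable (p : ℕ) [Fact p.Prime]

lemma gpAdj_iff (u v : (ZMod p)ˣ × ZMod p) :
    GpAdj p u v ↔ v.2 = ((v.1 * u.1⁻¹ : (ZMod p)ˣ) : ZMod p) + u.2 := by
  constructor
  · rintro ⟨z, h1, h2⟩
    have : z = v.1 * u.1⁻¹ := by rw [h1]; group
    rw [← this]; exact h2
  · intro h
    exact ⟨v.1 * u.1⁻¹, by group, h⟩

open scoped Classical in
lemma card_graph_filter (g : (ZMod p)ˣ → ZMod p) (q : (ZMod p)ˣ → Prop)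
    (P : (ZMod p)ˣ × ZMod p → Prop) [DecidablePred q] [DecidablePred P]
    (hP : ∀ v, P v ↔ (v.2 = g v.1 ∧ q v.1)) :
    (univ.filter P).card = (univ.filter q).card := by
  apply Finset.card_bij' (fun v _ => v.1) (fun b _ => (b, g b))
  · intro v hv; simp only [mem_filter, mem_univ, true_and] at hv ⊢
    exact ((hP v).mp hv).2
  · intro b hb; simp only [mem_filter, mem_univ, true_and] at hb ⊢
    exact (hP _).mpr ⟨rfl, hb⟩
  · intro v hv; simp only [mem_filter, mem_univ, true_and] at hv
    exact Prod.ext rfl ((hP v).mp hv).1.symm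
  · intro b hb; rfl

open scoped Classical in
lemma card_units_filter (k t : ZMod p) (hk : k ≠ 0) :
    (univ.filter fun b : (ZMod p)ˣ => (b : ZMod p) * k = t).card
      = if t = 0 then 0 else 1 := by
  split_ifs with ht
  · subst ht
    rw [Finset.card_eq_zero, Finset.filter_eq_empty_iff]
    intro b _
    exact mul_ne_zero b.ne_zero hk
  · rw [Finset.card_eq_one]
    refine ⟨Units.mk0 (t * k⁻¹) (by
      exact mul_ne_zero ht (inv_ne_zero hk)), ?_⟩
    ext b
    simp only [mem_filter, mem_univ, true_and, Finset.mem_singleton]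
    constructor
    · intro h
      apply Units.ext
      rw [Units.val_mk0]
      field_simp [← h]
      exact h
    · rintro rfl
      rw [Units.val_mk0]
      field_simp

end Aux

section Aux2
variable (p : ℕ) [Fact p.Prime]

open scoped Classical

lemma card_nbrs (u : (ZMod p)ˣ × ZMod p) :
    (univ.filter fun v : (ZMod p)ˣ × ZMod p => GpAdj p u v).card = p - 1 := by
  rw [card_graph_filter p (fun b => ((b * u.1⁻¹ : (ZMod p)ˣ) : ZMod p) + u.2) (fun _ => True)
    (fun v => GpAdj p u v) (fun v => (gpAdj_iff p u v).trans (and_iff_left trivial).symm)]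
  rw [Finset.filter_true_of_mem (by simp), Finset.card_univ, ZMod.card_units]

lemma card_codeg (u u' : (ZMod p)ˣ × ZMod p) :
    (univ.filter fun v : (ZMod p)ˣ × ZMod p => GpAdj p u v ∧ GpAdj p u' v).card
      = if u = u' then p - 1 else if u.1 ≠ u'.1 ∧ u.2 ≠ u'.2 then 1 else 0 := by
  set k : ZMod p := ((u.1 : ZMod p))⁻¹ - ((u'.1 : ZMod p))⁻¹ with hk
  set t : ZMod p := u'.2 - u.2 with ht
  have cast1 : ∀ (b w : (ZMod p)ˣ), ((b * w⁻¹ : (ZMod p)ˣ) : ZMod p)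
      = (b : ZMod p) * ((w : ZMod p))⁻¹ := by
    intro b w; rw [Units.val_mul, Units.val_inv_eq_inv_val]
  have key : (univ.filter fun v : (ZMod p)ˣ × ZMod p => GpAdj p u v ∧ GpAdj p u' v).card
      = (univ.filter fun b : (ZMod p)ˣ => (b : ZMod p) * k = t).card := by
    apply card_graph_filter p (fun b => ((b * u.1⁻¹ : (ZMod p)ˣ) : ZMod p) + u.2)
      (fun b : (ZMod p)ˣ => (b : ZMod p) * k = t)
    intro v
    rw [gpAdj_iff, gpAdj_iff]
    constructor
    · rintro ⟨h1, h2⟩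
      refine ⟨h1, ?_⟩
      rw [h1] at h2
      rw [cast1, cast1] at h2
      rw [hk, ht]; linear_combination h2
    · rintro ⟨h1, h2⟩
      refine ⟨h1, ?_⟩
      rw [h1, cast1, cast1]
      rw [hk, ht] at h2; linear_combination h2
  rw [key]
  by_cases huu : u = u'
  · subst huu
    have hk0 : k = 0 := by rw [hk, sub_self]
    have ht0 : t = 0 := by rw [ht, sub_self]
    rw [if_pos rfl]
    have e : (univ.filter fun b : (ZMod p)ˣ => (b : ZMod p) * k = t) = univ := by
      apply Finset.filter_true_of_mem; intro b _; rw [hk0, ht0, mul_zero]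
    rw [e, Finset.card_univ, ZMod.card_units]
  · rw [if_neg huu]
    by_cases h1 : u.1 = u'.1
    · have hk0 : k = 0 := by rw [hk, h1, sub_self]
      have ht0 : t ≠ 0 := by
        rw [ht, sub_ne_zero]
        intro h2
        exact huu (Prod.ext h1 h2.symm)
      have hcond : ¬(u.1 ≠ u'.1 ∧ u.2 ≠ u'.2) := fun hc => hc.1 h1
      rw [if_neg hcond, Finset.card_eq_zero, Finset.filter_eq_empty_iff]
      intro b _
      rw [hk0, mul_zero]
      exact fun h => ht0 h.symm
    · have hk0 : k ≠ 0 := by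
        rw [hk, sub_ne_zero]
        intro h
        exact h1 (Units.ext (inv_injective h))
      rw [card_units_filter p k t hk0]
      by_cases h2 : u.2 = u'.2
      · have ht0 : t = 0 := by rw [ht, h2, sub_self]
        have hcond : ¬(u.1 ≠ u'.1 ∧ u.2 ≠ u'.2) := fun hc => hc.2 h2
        rw [if_pos ht0, if_neg hcond]
      · have ht0 : t ≠ 0 := by
          rw [ht, sub_ne_zero]; exact fun h => h2 h.symm
        have hcond : u.1 ≠ u'.1 ∧ u.2 ≠ u'.2 := ⟨h1, h2⟩
        rw [if_neg ht0, if_pos hcond]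

end Aux2

section Aux3
variable (p : ℕ) [Fact p.Prime]

open scoped Classical

noncomputable def Gdeg (U : Finset ((ZMod p)ˣ × ZMod p)) (v : (ZMod p)ˣ × ZMod p) : ℕ :=
  (U.filter fun u => GpAdj p u v).card

noncomputable def GFib (U : Finset ((ZMod p)ˣ × ZMod p)) (y : ZMod p) : ℕ :=
  (U.filter fun x => x.2 = y).card

lemma sum_deg (U : Finset ((ZMod p)ˣ × ZMod p)) :
    ∑ v : (ZMod p)ˣ × ZMod p, Gdeg p U v = U.card * (p - 1) := by
  have : ∀ v, Gdeg p U v = ∑ u ∈ U, if GpAdj p u v then 1 else 0 := by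
    intro v; rw [Gdeg, Finset.card_filter]
  simp only [this]
  rw [Finset.sum_comm]
  have : ∀ u, (∑ v : (ZMod p)ˣ × ZMod p, if GpAdj p u v then 1 else 0) = p - 1 := by
    intro u; rw [← Finset.card_filter]; exact card_nbrs p u
  simp only [this]
  rw [Finset.sum_const, smul_eq_mul]

lemma sum_fib (U : Finset ((ZMod p)ˣ × ZMod p)) :
    ∑ u ∈ U, GFib p U u.2 = ∑ y : ZMod p, (GFib p U y) ^ 2 := by
  rw [← Finset.sum_fiberwise_of_maps_to (g := fun u : (ZMod p)ˣ × ZMod p => u.2)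
    (t := univ) (fun u _ => mem_univ u.2) (fun u => GFib p U u.2)]
  apply Finset.sum_congr rfl
  intro y _
  have h1 : ∀ u ∈ U.filter (fun x : (ZMod p)ˣ × ZMod p => x.2 = y), GFib p U u.2 = GFib p U y := by
    intro u hu
    rw [(Finset.mem_filter.mp hu).2]
  rw [Finset.sum_congr rfl h1, Finset.sum_const, smul_eq_mul, ← GFib, sq]

lemma card_le_fib (U : Finset ((ZMod p)ˣ × ZMod p)) :
    U.card ^ 2 ≤ p * ∑ u ∈ U, GFib p U u.2 := by
  rw [sum_fib]
  have h1 : U.card = ∑ y : ZMod p, GFib p U y :=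
    Finset.card_eq_sum_card_fiberwise (f := fun u : (ZMod p)ˣ × ZMod p => u.2)
      (fun u _ => mem_univ u.2)
  have h2 := Finset.sum_mul_sq_le_sq_mul_sq univ (fun _ : ZMod p => 1) (fun y => GFib p U y)
  simp only [one_pow, one_mul, Finset.sum_const, smul_eq_mul, mul_one] at h2
  rw [h1]
  calc (∑ y : ZMod p, GFib p U y) ^ 2 ≤ (univ.card : ℕ) * ∑ y : ZMod p, GFib p U y ^ 2 := h2
    _ = p * ∑ y : ZMod p, GFib p U y ^ 2 := by rw [Finset.card_univ, ZMod.card]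

lemma sum_deg_sq (U : Finset ((ZMod p)ˣ × ZMod p)) :
    ∑ v : (ZMod p)ˣ × ZMod p, (Gdeg p U v) ^ 2 + ∑ u ∈ U, GFib p U u.2
      ≤ U.card * (p - 1) + U.card ^ 2 := by
  have hdeg : ∀ v, Gdeg p U v = ∑ u ∈ U, if GpAdj p u v then 1 else 0 := by
    intro v; rw [Gdeg, Finset.card_filter]
  have hmul : ∀ (a b : Prop), (if a then (1:ℕ) else 0) * (if b then 1 else 0)
      = if a ∧ b then 1 else 0 := by
    intro a b
    by_cases ha : a <;> by_cases hb : b <;> simp [ha, hb]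
  have step1 : ∑ v : (ZMod p)ˣ × ZMod p, (Gdeg p U v) ^ 2
      = ∑ u ∈ U, ∑ u' ∈ U, ∑ v : (ZMod p)ˣ × ZMod p,
          if GpAdj p u v ∧ GpAdj p u' v then 1 else 0 := by
    simp only [hdeg, sq, Finset.sum_mul_sum]
    rw [Finset.sum_comm]
    apply Finset.sum_congr rfl; intro u _
    rw [Finset.sum_comm]
    apply Finset.sum_congr rfl; intro u' _
    apply Finset.sum_congr rfl; intro v _
    exact hmul _ _
  have step2 : ∀ u u', (∑ v : (ZMod p)ˣ × ZMod p,
      if GpAdj p u v ∧ GpAdj p u' v then 1 else 0)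
      = if u = u' then p - 1 else if u.1 ≠ u'.1 ∧ u.2 ≠ u'.2 then 1 else 0 := by
    intro u u'; rw [← Finset.card_filter]; exact card_codeg p u u'
  have hfib : ∀ u : (ZMod p)ˣ × ZMod p, GFib p U u.2 = ∑ u' ∈ U, if u'.2 = u.2 then 1 else 0 := by
    intro u; rw [GFib, Finset.card_filter]
  have pw : ∀ u u' : (ZMod p)ˣ × ZMod p,
      (if u = u' then p - 1 else if u.1 ≠ u'.1 ∧ u.2 ≠ u'.2 then 1 else 0)
        + (if u'.2 = u.2 then 1 else 0) ≤ (if u = u' then p - 1 else 0) + 1 := by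
    intro u u'
    by_cases h : u = u'
    · subst h; simp
    · rw [if_neg h, if_neg h]
      by_cases hc : u.1 ≠ u'.1 ∧ u.2 ≠ u'.2
      · have : ¬ u'.2 = u.2 := fun he => hc.2 he.symm
        rw [if_pos hc, if_neg this]
      · rw [if_neg hc]
        split_ifs <;> omega
  calc ∑ v : (ZMod p)ˣ × ZMod p, (Gdeg p U v) ^ 2 + ∑ u ∈ U, GFib p U u.2
      = ∑ u ∈ U, ∑ u' ∈ U, ((if u = u' then p - 1 else if u.1 ≠ u'.1 ∧ u.2 ≠ u'.2 then 1 else 0)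
          + (if u'.2 = u.2 then 1 else 0)) := by
        rw [step1]
        simp only [step2, hfib]
        rw [← Finset.sum_add_distrib]
        apply Finset.sum_congr rfl; intro u _
        rw [← Finset.sum_add_distrib]
    _ ≤ ∑ u ∈ U, ∑ u' ∈ U, ((if u = u' then p - 1 else 0) + 1) := by
        apply Finset.sum_le_sum; intro u _
        apply Finset.sum_le_sum; intro u' _
        exact pw u u'
    _ = U.card * (p - 1) + U.card ^ 2 := by
        simp only [Finset.sum_add_distrib, Finset.sum_const, smul_eq_mul, mul_one]
        have : ∀ u ∈ U, (∑ u' ∈ U, if u = u' then p - 1 else 0) = p - 1 := by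
          intro u hu
          rw [Finset.sum_ite_eq]
          exact if_pos hu
        rw [Finset.sum_congr rfl this, Finset.sum_const, smul_eq_mul, sq]

end Aux3

section Aux4
variable (p : ℕ) [Fact p.Prime]

open scoped Classical

lemma edge_count (U V : Finset ((ZMod p)ˣ × ZMod p)) :
    Nat.card {uv : ((ZMod p)ˣ × ZMod p) × ((ZMod p)ˣ × ZMod p) //
        uv.1 ∈ U ∧ uv.2 ∈ V ∧ GpAdj p uv.1 uv.2}
      = ∑ v ∈ V, Gdeg p U v := by
  rw [Nat.card_eq_fintype_card, Fintype.card_subtype]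
  have e : (univ.filter fun uv : ((ZMod p)ˣ × ZMod p) × ((ZMod p)ˣ × ZMod p) =>
      uv.1 ∈ U ∧ uv.2 ∈ V ∧ GpAdj p uv.1 uv.2)
      = (U ×ˢ V).filter fun uv => GpAdj p uv.1 uv.2 := by
    ext uv
    simp only [mem_filter, mem_univ, true_and, Finset.mem_product]
    tauto
  rw [e, Finset.card_filter, Finset.sum_product]
  rw [Finset.sum_comm]
  apply Finset.sum_congr rfl
  intro v _
  rw [Gdeg, Finset.card_filter]

end Aux4

/-- Expander mixing for `G_p`: for all sets `U` of left vertices and `V` of right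
vertices, `| e(U,V) − |U|·|V|/p | ≤ √p · √(|U|·|V|)`. -/
theorem Gp_mixing (p : ℕ) [Fact p.Prime]
    (U V : Finset ((ZMod p)ˣ × ZMod p)) :
    |(Nat.card {uv : ((ZMod p)ˣ × ZMod p) × ((ZMod p)ˣ × ZMod p) //
          uv.1 ∈ U ∧ uv.2 ∈ V ∧ GpAdj p uv.1 uv.2} : ℝ)
        - (U.card : ℝ) * (V.card : ℝ) / (p : ℝ)|
      ≤ Real.sqrt p * Real.sqrt ((U.card : ℝ) * (V.card : ℝ)) := by
  classical
  have hp : (p : ℕ).Prime := Fact.out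
  have hp1 : 1 ≤ p := hp.one_lt.le
  have hP : (0:ℝ) < p := by exact_mod_cast hp.pos
  set m : ℝ := (U.card : ℝ) with hm
  set n : ℝ := (V.card : ℝ) with hn
  set P : ℝ := (p : ℝ) with hPdef
  have hm0 : 0 ≤ m := by positivity
  have hn0 : 0 ≤ n := by positivity
  -- real versions of the counting lemmas
  have hcast_sub : ((p - 1 : ℕ) : ℝ) = P - 1 := by
    push_cast [Nat.cast_sub hp1]; ring
  have S1 : ∑ v : (ZMod p)ˣ × ZMod p, (Gdeg p U v : ℝ) = m * (P - 1) := by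
    rw [← Nat.cast_sum]
    rw [sum_deg p U]
    push_cast [Nat.cast_sub hp1]
    ring
  set C : ℝ := ((∑ u ∈ U, GFib p U u.2 : ℕ) : ℝ) with hC
  have S2 : ∑ v : (ZMod p)ˣ × ZMod p, (Gdeg p U v : ℝ) ^ 2 + C ≤ m * (P - 1) + m ^ 2 := by
    rw [hC, hm, show P - 1 = ((p - 1 : ℕ) : ℝ) from hcast_sub.symm]
    exact_mod_cast sum_deg_sq p U
  have S3 : m ^ 2 ≤ P * C := by
    rw [hm, hPdef, hC]
    exact_mod_cast card_le_fib p U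
  -- the variance bound
  have key : ∑ v : (ZMod p)ˣ × ZMod p, ((Gdeg p U v : ℝ) - m / P) ^ 2 ≤ P * m := by
    have hNcard : ((Finset.univ : Finset ((ZMod p)ˣ × ZMod p)).card : ℝ) = (P - 1) * P := by
      rw [Finset.card_univ, Fintype.card_prod, ZMod.card, ZMod.card_units]
      push_cast [Nat.cast_sub hp1]
      ring
    have expand : ∑ v : (ZMod p)ˣ × ZMod p, ((Gdeg p U v : ℝ) - m / P) ^ 2
        = ∑ v : (ZMod p)ˣ × ZMod p, (Gdeg p U v : ℝ) ^ 2
          - 2 * (m / P) * ∑ v : (ZMod p)ˣ × ZMod p, (Gdeg p U v : ℝ)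
          + ((Finset.univ : Finset ((ZMod p)ˣ × ZMod p)).card : ℝ) * (m / P) ^ 2 := by
      have : ∀ v : (ZMod p)ˣ × ZMod p, ((Gdeg p U v : ℝ) - m / P) ^ 2
          = (Gdeg p U v : ℝ) ^ 2 - 2 * (m / P) * (Gdeg p U v : ℝ) + (m / P) ^ 2 := by
        intro v; ring
      rw [Finset.sum_congr rfl fun v _ => this v, Finset.sum_add_distrib,
        Finset.sum_sub_distrib, ← Finset.mul_sum, Finset.sum_const, nsmul_eq_mul]
    rw [expand, S1, hNcard]
    set c : ℝ := m / P with hcdef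
    have hc0 : 0 ≤ c := by rw [hcdef]; positivity
    have hc' : m = P * c := by rw [hcdef]; field_simp
    have hCc : P * c ^ 2 ≤ C := by
      have h := S3
      rw [hc'] at h
      nlinarith [hP]
    have S2' := S2
    rw [hc'] at S2'
    rw [hc']
    nlinarith [S2', hCc, mul_nonneg hP.le hc0, hP, sq_nonneg c]
  -- Cauchy–Schwarz over V
  have hE : (Nat.card {uv : ((ZMod p)ˣ × ZMod p) × ((ZMod p)ˣ × ZMod p) //
        uv.1 ∈ U ∧ uv.2 ∈ V ∧ GpAdj p uv.1 uv.2} : ℝ) - m * n / P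
      = ∑ v ∈ V, ((Gdeg p U v : ℝ) - m / P) := by
    rw [edge_count p U V, Nat.cast_sum, Finset.sum_sub_distrib, Finset.sum_const,
      nsmul_eq_mul, ← hn]
    ring
  have hsq : ((Nat.card {uv : ((ZMod p)ˣ × ZMod p) × ((ZMod p)ˣ × ZMod p) //
        uv.1 ∈ U ∧ uv.2 ∈ V ∧ GpAdj p uv.1 uv.2} : ℝ) - m * n / P) ^ 2 ≤ P * (m * n) := by
    rw [hE]
    have cs := Finset.sum_mul_sq_le_sq_mul_sq V (fun _ => (1:ℝ))
      (fun v => (Gdeg p U v : ℝ) - m / P)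
    simp only [one_pow, one_mul, Finset.sum_const, nsmul_eq_mul, mul_one] at cs
    rw [← hn] at cs
    have ext : ∑ v ∈ V, ((Gdeg p U v : ℝ) - m / P) ^ 2
        ≤ ∑ v : (ZMod p)ˣ × ZMod p, ((Gdeg p U v : ℝ) - m / P) ^ 2 :=
      Finset.sum_le_sum_of_subset_of_nonneg (Finset.subset_univ V)
        (fun v _ _ => sq_nonneg _)
    calc (∑ v ∈ V, ((Gdeg p U v : ℝ) - m / P)) ^ 2
        ≤ n * ∑ v ∈ V, ((Gdeg p U v : ℝ) - m / P) ^ 2 := cs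
      _ ≤ n * (P * m) := by
          apply mul_le_mul_of_nonneg_left _ hn0
          exact le_trans ext key
      _ = P * (m * n) := by ring
  calc |(Nat.card {uv : ((ZMod p)ˣ × ZMod p) × ((ZMod p)ˣ × ZMod p) //
        uv.1 ∈ U ∧ uv.2 ∈ V ∧ GpAdj p uv.1 uv.2} : ℝ) - m * n / P|
      = Real.sqrt (((Nat.card {uv : ((ZMod p)ˣ × ZMod p) × ((ZMod p)ˣ × ZMod p) //
          uv.1 ∈ U ∧ uv.2 ∈ V ∧ GpAdj p uv.1 uv.2} : ℝ) - m * n / P) ^ 2) :=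
        (Real.sqrt_sq_eq_abs _).symm
    _ ≤ Real.sqrt (P * (m * n)) := Real.sqrt_le_sqrt hsq
    _ = Real.sqrt P * Real.sqrt (m * n) := Real.sqrt_mul hP.le _
end

section
/- Let G be a d-regular bipartite graph with parts L and R, both finite of the same cardinality N, and let A : L × R → ℝ be its biadjacency matrix (A(u,v) = 1 if u is adjacent to v and 0 otherwise). Suppose λ ≥ 0 is such that for every function f : R → ℝ with ∑_{v ∈ R} f(v) = 0 one has ‖A·f‖₂ ≤ λ·‖f‖₂ (where (A·f)(u) = ∑_{v ∈ R} A(u,v)·f(v) and ‖·‖₂ is the Euclidean norm). Then for all subsets U ⊆ L and V ⊆ R, the number e(U,V) of adjacent pairs satisfies | e(U,V) − d·|U|·|V|/N | ≤ λ·√(|U|·|V|). -/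
/-- Expander mixing lemma for `d`-regular bipartite graphs: if both parts have `N`
vertices and the biadjacency operator contracts mean-zero vectors by a factor
`λ` in Euclidean norm, then `| e(U,V) − d·|U|·|V|/N | ≤ λ·√(|U|·|V|)` for all
`U ⊆ L`, `V ⊆ R`. -/
theorem expander_mixing_lemma {L R : Type*} [Fintype L] [Fintype R]
    (N d : ℕ) (hNL : Fintype.card L = N) (hNR : Fintype.card R = N)
    (Adj : L → R → Prop) [∀ u v, Decidable (Adj u v)]
    (hleft : ∀ u : L, (Finset.univ.filter (fun v : R => Adj u v)).card = d)
    (hright : ∀ v : R, (Finset.univ.filter (fun u : L => Adj u v)).card = d)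
    (lam : ℝ) (hlam : 0 ≤ lam)
    (hspec : ∀ f : R → ℝ, (∑ v : R, f v) = 0 →
      Real.sqrt (∑ u : L, (∑ v : R, (if Adj u v then (1 : ℝ) else 0) * f v) ^ 2)
        ≤ lam * Real.sqrt (∑ v : R, (f v) ^ 2))
    (U : Finset L) (V : Finset R) :
    |(((U ×ˢ V).filter (fun uv : L × R => Adj uv.1 uv.2)).card : ℝ)
        - (d : ℝ) * (U.card : ℝ) * (V.card : ℝ) / (N : ℝ)|
      ≤ lam * Real.sqrt ((U.card : ℝ) * (V.card : ℝ)) := by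
  classical
  rcases Nat.eq_zero_or_pos N with hN0 | hNpos
  · subst hN0
    have hLe : IsEmpty L := Fintype.card_eq_zero_iff.mp hNL
    have hU : U = ∅ := Finset.eq_empty_of_isEmpty U
    subst hU
    simp
  · have hNne : (N : ℝ) ≠ 0 := by positivity
    set c : ℝ := (V.card : ℝ) / N with hc
    set f : R → ℝ := fun v => (if v ∈ V then (1 : ℝ) else 0) - c with hf
    have hindV : ∑ v : R, (if v ∈ V then (1 : ℝ) else 0) = (V.card : ℝ) := by
      simp [Finset.sum_boole, Finset.filter_mem_eq_inter]
    have hsumf : (∑ v : R, f v) = 0 := by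
      simp only [hf, Finset.sum_sub_distrib, hindV, Finset.sum_const, nsmul_eq_mul, Finset.card_univ, hNR]
      field_simp [hc]
      linarith [show (N : ℝ) * c = V.card by rw [hc]; field_simp]
    set g : L → ℝ := fun u => ∑ v : R, (if Adj u v then (1 : ℝ) else 0) * f v with hg
    have hgu : ∀ u : L, g u = (∑ v ∈ V, (if Adj u v then (1 : ℝ) else 0)) - c * d := by
      intro u
      have h1 : ∀ v : R, (if Adj u v then (1 : ℝ) else 0) * f v
          = (if v ∈ V then (if Adj u v then (1 : ℝ) else 0) else 0)
            - c * (if Adj u v then (1 : ℝ) else 0) := by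
        intro v
        by_cases h : v ∈ V <;> by_cases h' : Adj u v <;> simp [hf, h, h'] <;> ring
      have h2 : ∑ v : R, (if Adj u v then (1 : ℝ) else 0) = (d : ℝ) := by
        rw [Finset.sum_boole, hleft u]
      calc g u = ∑ v : R, ((if v ∈ V then (if Adj u v then (1 : ℝ) else 0) else 0)
            - c * (if Adj u v then (1 : ℝ) else 0)) := by
            rw [hg]; exact Finset.sum_congr rfl fun v _ => h1 v
        _ = (∑ v ∈ V, (if Adj u v then (1 : ℝ) else 0)) - c * d := by
            rw [Finset.sum_sub_distrib, ← Finset.mul_sum, h2, Finset.sum_ite_mem,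
              Finset.univ_inter]
    have he : (((U ×ˢ V).filter (fun uv : L × R => Adj uv.1 uv.2)).card : ℝ)
        = ∑ u ∈ U, ∑ v ∈ V, (if Adj u v then (1 : ℝ) else 0) := by
      rw [Finset.card_filter]
      push_cast
      rw [Finset.sum_product]
    have hS : ∑ u ∈ U, g u
        = (((U ×ˢ V).filter (fun uv : L × R => Adj uv.1 uv.2)).card : ℝ)
          - (d : ℝ) * (U.card : ℝ) * (V.card : ℝ) / N := by
      rw [he]
      rw [Finset.sum_congr rfl fun u _ => hgu u, Finset.sum_sub_distrib,
        Finset.sum_const, nsmul_eq_mul, hc]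
      ring
    -- Cauchy-Schwarz
    have hCS : (∑ u ∈ U, g u) ^ 2 ≤ (U.card : ℝ) * ∑ u : L, (g u) ^ 2 := by
      have h1 : (∑ u ∈ U, g u) ^ 2 ≤ (U.card : ℝ) * ∑ u ∈ U, (g u) ^ 2 :=
        sq_sum_le_card_mul_sum_sq
      have h2 : ∑ u ∈ U, (g u) ^ 2 ≤ ∑ u : L, (g u) ^ 2 :=
        Finset.sum_le_sum_of_subset_of_nonneg (Finset.subset_univ U)
          (fun u _ _ => sq_nonneg _)
      calc (∑ u ∈ U, g u) ^ 2 ≤ (U.card : ℝ) * ∑ u ∈ U, (g u) ^ 2 := h1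
        _ ≤ (U.card : ℝ) * ∑ u : L, (g u) ^ 2 :=
            mul_le_mul_of_nonneg_left h2 (by positivity)
    have hff : ∑ v : R, (f v) ^ 2 ≤ (V.card : ℝ) := by
      have h1 : ∀ v : R, (f v) ^ 2 = (if v ∈ V then (1 : ℝ) else 0)
          - 2 * c * (if v ∈ V then (1 : ℝ) else 0) + c ^ 2 := by
        intro v; by_cases h : v ∈ V <;> simp [hf, h] <;> ring
      have h2 : ∑ v : R, (f v) ^ 2 = (V.card : ℝ) - (V.card : ℝ) ^ 2 / N := by
        rw [Finset.sum_congr rfl fun v _ => h1 v]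
        rw [Finset.sum_add_distrib, Finset.sum_sub_distrib, hindV, ← Finset.mul_sum,
          hindV, Finset.sum_const, nsmul_eq_mul, Finset.card_univ, hNR, hc]
        field_simp
        ring
      rw [h2]
      have : 0 ≤ (V.card : ℝ) ^ 2 / N := by positivity
      linarith
    have habs : |∑ u ∈ U, g u| ≤ Real.sqrt (U.card : ℝ) * Real.sqrt (∑ u : L, (g u) ^ 2) := by
      rw [← Real.sqrt_sq_eq_abs, ← Real.sqrt_mul (by positivity)]
      exact Real.sqrt_le_sqrt hCS
    have hstep : Real.sqrt (∑ u : L, (g u) ^ 2) ≤ lam * Real.sqrt (V.card : ℝ) := by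
      calc Real.sqrt (∑ u : L, (g u) ^ 2) ≤ lam * Real.sqrt (∑ v : R, (f v) ^ 2) :=
            hspec f hsumf
        _ ≤ lam * Real.sqrt (V.card : ℝ) :=
            mul_le_mul_of_nonneg_left (Real.sqrt_le_sqrt hff) hlam
    calc |(((U ×ˢ V).filter (fun uv : L × R => Adj uv.1 uv.2)).card : ℝ)
          - (d : ℝ) * (U.card : ℝ) * (V.card : ℝ) / (N : ℝ)|
        = |∑ u ∈ U, g u| := by rw [hS]
      _ ≤ Real.sqrt (U.card : ℝ) * Real.sqrt (∑ u : L, (g u) ^ 2) := habs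
      _ ≤ Real.sqrt (U.card : ℝ) * (lam * Real.sqrt (V.card : ℝ)) :=
          mul_le_mul_of_nonneg_left hstep (Real.sqrt_nonneg _)
      _ = lam * Real.sqrt ((U.card : ℝ) * (V.card : ℝ)) := by
          rw [Real.sqrt_mul (by positivity)]; ring
end
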